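/- Let n ≥ 2 and r > 0 with r ≠ n(n−1). The symmetric (n×n) matrix H₁ whose diagonal entries are 2(n+r)(n−1)/r − 2 for the first n−1 rows and 2r/n for the last row, and all off-diagonal entries equal to −2, is positive semidefinite; its eigenvalues are 0, 2(n³−n²+r²)/(rn), and 2(n+r)(n−1)/r with multiplicity n−2. -/

import Mathlib

open Polynomial

section Aux

open Matrix Finset

private lemma quadFormAux {nn : ℕ} (c x : Fin nn → ℝ) :
    x ⬝ᵥ ((Matrix.of fun i j : Fin nn => (if i = j then c i else 0) - 2) *ᵥ x)
      = (∑ i, c i * x i ^ 2) - 2 * (∑ i, x i) ^ 2 := by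
  have hmv : ∀ i, ((Matrix.of fun i j : Fin nn => (if i = j then c i else 0) - 2) *ᵥ x) i
      = c i * x i - 2 * ∑ j, x j := by
    intro i
    simp [mulVec, dotProduct, sub_mul, Finset.sum_sub_distrib, ite_mul, Finset.sum_ite_eq,
      Finset.mul_sum]
  simp only [dotProduct, hmv]
  calc ∑ i, x i * (c i * x i - 2 * ∑ j, x j)
      = ∑ i, (c i * x i^2 - (2 * ∑ j, x j) * x i) := by
        apply Finset.sum_congr rfl; intros; ring
    _ = (∑ i, c i * x i^2) - (2 * ∑ j, x j) * ∑ i, x i := by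
        rw [Finset.sum_sub_distrib, ← Finset.mul_sum]
    _ = _ := by ring

private lemma detDiagAddTwoAux {F : Type*} [Field F] {nn : ℕ} (D : Fin nn → F)
    (hD : ∀ i, D i ≠ 0) :
    (Matrix.diagonal D + Matrix.vecMulVec (fun _ => (2:F)) 1).det
      = (∏ i, D i) * (1 + ∑ i, (D i)⁻¹ * 2) := by
  have h1 : Matrix.diagonal D + Matrix.vecMulVec (fun _ => (2:F)) 1
      = Matrix.diagonal D * (1 + Matrix.vecMulVec (fun i => (D i)⁻¹ * 2) 1) := by
    rw [Matrix.mul_add, Matrix.mul_one]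
    congr 1
    ext i j
    rw [Matrix.diagonal_mul, Matrix.vecMulVec_apply, Matrix.vecMulVec_apply]
    rw [← mul_assoc, ← mul_assoc, mul_inv_cancel₀ (hD i), one_mul]
  rw [h1, Matrix.det_mul, Matrix.det_diagonal, Matrix.vecMulVec_eq Unit,
    Matrix.det_one_add_replicateCol_mul_replicateRow]
  simp [dotProduct]

end Aux

/-- the Hessian block H₁ is positive semidefinite, with eigenvalues
`0`, `2(n³−n²+r²)/(rn)` and `2(n+r)(n−1)/r` (the latter of multiplicity n−2),
expressed via its characteristic polynomial. -/
theorem stmt2 (n : ℕ) (hn : 2 ≤ n) (r : ℝ) (hr : 0 < r)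
    (hrn : r ≠ (n : ℝ)*((n : ℝ)-1)) :
    (Matrix.of (fun i j : Fin n =>
        if i = j then
          (if (i : ℕ) < n - 1 then 2*((n : ℝ)+r)*((n : ℝ)-1)/r - 2 else 2*r/(n : ℝ))
        else (-2 : ℝ))).PosSemidef
    ∧ (Matrix.of (fun i j : Fin n =>
        if i = j then
          (if (i : ℕ) < n - 1 then 2*((n : ℝ)+r)*((n : ℝ)-1)/r - 2 else 2*r/(n : ℝ))
        else (-2 : ℝ))).charpoly
      = X * (X - C (2*((n : ℝ)^3 - (n : ℝ)^2 + r^2)/(r*(n : ℝ))))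
          * (X - C (2*((n : ℝ)+r)*((n : ℝ)-1)/r))^(n-2) := by
  obtain ⟨k, rfl⟩ : ∃ k, n = k + 2 := ⟨n - 2, by omega⟩
  clear hn hrn
  simp only [show k + 2 - 1 = k + 1 from rfl, show k + 2 - 2 = k from rfl]
  set N : ℝ := ((k + 2 : ℕ) : ℝ) with hNdef
  have hN : N = (k:ℝ) + 2 := by push_cast [hNdef]; ring
  have hr0 : r ≠ 0 := ne_of_gt hr
  have hk0 : (0:ℝ) ≤ (k:ℝ) := Nat.cast_nonneg k
  -- constants
  set a : ℝ := 2*(N+r)*(N-1)/r with hadef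
  set b : ℝ := 2*r/N + 2 with hbdef
  set t : ℝ := 2*(N^3 - N^2 + r^2)/(r*N) with htdef
  have hNpos : 0 < N := by rw [hN]; positivity
  have hN1pos : 0 < N - 1 := by rw [hN]; nlinarith
  have ha_pos : 0 < a := by
    rw [hadef]; exact div_pos (by nlinarith) hr
  have hb_pos : 0 < b := by
    rw [hbdef]
    have := div_pos (by linarith : (0:ℝ) < 2*r) hNpos
    linarith
  set c : Fin (k+2) → ℝ := fun i => if (i:ℕ) < k + 1 then a else b with hcdef
  have hc_pos : ∀ i, 0 < c i := by
    intro i; rw [hcdef]; dsimp only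
    split <;> [exact ha_pos; exact hb_pos]
  have hM : (Matrix.of (fun i j : Fin (k+2) =>
        if i = j then (if (i:ℕ) < k + 1 then a - 2 else 2*r/N) else (-2:ℝ)))
      = Matrix.of fun i j : Fin (k+2) => (if i = j then c i else 0) - 2 := by
    ext i j
    by_cases h : i = j
    · subst h
      by_cases h2 : (i:ℕ) < k + 1 <;> simp [hcdef, h2, hbdef] <;> split_ifs <;> ring
    · simp [h]
  rw [hM]
  constructor
  · -- positive semidefinite
    rw [Matrix.posSemidef_iff_dotProduct_mulVec]
    constructor
    · ext i j
      by_cases h : i = j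
      · subst h; rfl
      · simp [Matrix.conjTranspose_apply, h, Ne.symm h]
    · intro x
      rw [star_trivial, quadFormAux]
      -- key inequality via Cauchy-Schwarz
      have hsum_inv : (∑ i, (c i)⁻¹) = 1/2 := by
        rw [Fin.sum_univ_castSucc]
        have h1 : ∀ i : Fin (k+1), c i.castSucc = a := by
          intro i; simp [hcdef, Fin.coe_castSucc, i.isLt, i.is_le]
        have h2 : c (Fin.last (k+1)) = b := by simp [hcdef]
        simp only [h1, h2, Finset.sum_const, Finset.card_univ, Fintype.card_fin, nsmul_eq_mul]
        have hkm : ((k+1:ℕ):ℝ) = N - 1 := by rw [hN]; push_cast; ring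
        rw [hkm, hadef, hbdef, hN]
        have h3 : (k:ℝ) + 2 + r ≠ 0 := by positivity
        have h4 : (k:ℝ) + 2 ≠ 0 := by positivity
        have h5 : (k:ℝ) + 2 - 1 ≠ 0 := by nlinarith
        field_simp
        ring
      have cs := Finset.sum_sq_le_sum_mul_sum_of_sq_eq_mul Finset.univ
        (r := x) (f := fun i => (c i)⁻¹) (g := fun i => c i * x i ^ 2)
        (fun i _ => (inv_pos.mpr (hc_pos i)).le)
        (fun i _ => mul_nonneg (hc_pos i).le (sq_nonneg _))
        (fun i _ => by
          rw [← mul_assoc, inv_mul_cancel₀ (hc_pos i).ne', one_mul])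
      rw [hsum_inv] at cs
      have hQ : 0 ≤ ∑ i, c i * x i ^ 2 :=
        Finset.sum_nonneg fun i _ => mul_nonneg (hc_pos i).le (sq_nonneg _)
      linarith
  · -- characteristic polynomial
    set M0 := Matrix.of fun i j : Fin (k+2) => (if i = j then c i else 0) - (2:ℝ) with hM0
    set φ : Polynomial ℝ →+* RatFunc ℝ := (algebraMap (Polynomial ℝ) (RatFunc ℝ)) with hφ
    have hinj : Function.Injective φ := IsFractionRing.injective (Polynomial ℝ) (RatFunc ℝ)
    apply hinj
    have h2K : φ (C (2:ℝ)) = 2 := by rw [map_ofNat C, map_ofNat]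
    have hD : ∀ d : ℝ, φ (X - C d) ≠ 0 := fun d =>
      (map_ne_zero_iff φ hinj).mpr (X_sub_C_ne_zero d)
    have hcharmap : (Matrix.charmatrix M0).map φ
        = Matrix.diagonal (fun i => φ (X - C (c i)))
          + Matrix.vecMulVec (fun _ => (2: RatFunc ℝ)) 1 := by
      ext i j
      by_cases h : i = j
      · subst h
        rw [Matrix.map_apply, Matrix.charmatrix_apply_eq]
        have hMii : M0 i i = c i - 2 := by simp [hM0]
        rw [hMii]
        have : (X : Polynomial ℝ) - C (c i - 2) = (X - C (c i)) + C 2 := by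
          rw [map_sub C]; ring
        rw [this, map_add, h2K]
        simp [Matrix.vecMulVec_apply]
      · rw [Matrix.map_apply, Matrix.charmatrix_apply_ne _ _ _ h]
        have hMij : M0 i j = -2 := by simp [hM0, h]
        rw [hMij]
        have : -(C (-2 : ℝ)) = C 2 := by rw [map_neg]; ring
        rw [this, h2K]
        simp [Matrix.diagonal_apply_ne _ h, Matrix.vecMulVec_apply]
    have hdet : φ (M0.charpoly)
        = (∏ i, φ (X - C (c i))) * (1 + ∑ i, (φ (X - C (c i)))⁻¹ * 2) := by
      rw [Matrix.charpoly, RingHom.map_det, RingHom.mapMatrix_apply, hcharmap,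
        detDiagAddTwoAux _ (fun i => hD (c i))]
    have hca : ∀ i : Fin (k+1), c i.castSucc = a := by
      intro i; simp [hcdef, Fin.coe_castSucc, i.isLt, i.is_le]
    have hcb : c (Fin.last (k+1)) = b := by simp [hcdef]
    have hprod : (∏ i : Fin (k+2), φ (X - C (c i)))
        = φ (X - C a) ^ (k+1) * φ (X - C b) := by
      rw [Fin.prod_univ_castSucc]
      simp only [hca, hcb, Finset.prod_const, Finset.card_univ, Fintype.card_fin]
    have hsum2 : (∑ i : Fin (k+2), (φ (X - C (c i)))⁻¹ * 2)
        = ((k+1:ℕ): RatFunc ℝ) * ((φ (X - C a))⁻¹ * 2) + (φ (X - C b))⁻¹ * 2 := by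
      rw [Fin.sum_univ_castSucc]
      simp only [hca, hcb, Finset.sum_const, Finset.card_univ, Fintype.card_fin, nsmul_eq_mul]
    -- real identities
    have h3 : (k:ℝ) + 2 + r ≠ 0 := by positivity
    have h4 : (k:ℝ) + 2 ≠ 0 := by positivity
    have hk0 : (0:ℝ) ≤ (k:ℝ) := Nat.cast_nonneg k
    have h5 : (k:ℝ) + 2 - 1 ≠ 0 := by nlinarith
    have hk1 : a + b - 2*((k+1:ℕ):ℝ) - 2 = t := by
      rw [hadef, hbdef, htdef, hN]; push_cast; field_simp; ring
    have hk2 : a*b - 2*((k+1:ℕ):ℝ)*b - 2*a = 0 := by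
      rw [hadef, hbdef, hN]; push_cast; field_simp; ring
    have e1 : C a + C b - C (2*((k+1:ℕ):ℝ)) - C 2 = C t := by
      rw [← C_add, ← C_sub, ← C_sub, hk1]
    have e2 : C a * C b - C (2*((k+1:ℕ):ℝ)) * C b - C 2 * C a = 0 := by
      rw [← C_mul, ← C_mul, ← C_mul, ← C_sub, ← C_sub, hk2, C_0]
    have hkey : (X - C a)*(X - C b) + C (2*((k+1:ℕ):ℝ))*(X - C b) + C 2*(X - C a)
        = X*(X - C t) := by linear_combination e2 - X * e1
    have hCkK : φ (C (2*((k+1:ℕ):ℝ))) = 2 * ((k+1:ℕ): RatFunc ℝ) := by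
      rw [map_mul C, map_ofNat C, map_natCast C, map_mul, map_ofNat, map_natCast]
    have hkeyK : φ (X - C a) * φ (X - C b) + (2*((k+1:ℕ): RatFunc ℝ)) * φ (X - C b)
          + 2 * φ (X - C a) = φ X * φ (X - C t) := by
      have h := congrArg φ hkey
      simp only [map_mul, map_add, map_sub, map_natCast, h2K] at h
      simp only [map_sub]
      linear_combination h
    rw [hdet, hprod, hsum2]
    rw [map_mul, map_mul, map_pow]
    have hPa := hD a
    have hPb := hD b
    have hPaPa : φ (X - C a) * (φ (X - C a))⁻¹ = 1 := mul_inv_cancel₀ hPa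
    have hPbPb : φ (X - C b) * (φ (X - C b))⁻¹ = 1 := mul_inv_cancel₀ hPb
    have expand : φ (X - C a) ^ (k+1) * φ (X - C b) *
        (1 + (((k+1:ℕ): RatFunc ℝ) * ((φ (X - C a))⁻¹ * 2) + (φ (X - C b))⁻¹ * 2))
        = φ (X - C a) ^ k * (φ (X - C a) * φ (X - C b)
            + (2*((k+1:ℕ): RatFunc ℝ)) * φ (X - C b) + 2 * φ (X - C a)) := by
      linear_combination (2*((k+1:ℕ): RatFunc ℝ)*φ (X - C b)*φ (X - C a)^k) * hPaPa
        + (2*φ (X - C a)^(k+1)) * hPbPb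
    rw [expand, hkeyK]
    ring
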